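/- Let E be a finite-dimensional real normed vector space with geometric structure B, and let F, G : E → ℝ be differentiable with differentiable left-gradient fields gF, gG : E → E with respect to B. Let g : E → E be a differentiable left-gradient field of the product F · G with respect to B. Then for every x, trace(fderiv ℝ g x) = F x * trace(fderiv ℝ gG x) + G x * trace(fderiv ℝ gF x) + B x (gF x) (gG x) + B x (gG x) (gF x); that is, Δ^L_B (F G) = F Δ^L_B G + G Δ^L_B F + b(∇^L F, ∇^L G) + b(∇^L G, ∇^L F). -/

import Mathlib

lemma trace_clm_smulRight {E : Type*} [NormedAddCommGroup E] [NormedSpace ℝ E]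
    [FiniteDimensional ℝ E] (L : E →L[ℝ] ℝ) (v : E) :
    LinearMap.trace ℝ E (L.smulRight v).toLinearMap = L v := by
  have h : (L.smulRight v).toLinearMap =
      (LinearMap.toSpanSingleton ℝ E v) ∘ₗ (L : E →ₗ[ℝ] ℝ) := by
    ext w; simp [LinearMap.toSpanSingleton]
  rw [h, LinearMap.trace_comp_comm']
  have h2 : (L : E →ₗ[ℝ] ℝ) ∘ₗ LinearMap.toSpanSingleton ℝ E v =
      (L v) • LinearMap.id := by
    ext r; simp [LinearMap.toSpanSingleton, smul_eq_mul, mul_comm]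
  rw [h2, map_smul, LinearMap.trace_id, smul_eq_mul]
  simp

/-- Product rule for the left Laplacian:
`Δ^L_B (F G) = F Δ^L_B G + G Δ^L_B F + b(∇^L F, ∇^L G) + b(∇^L G, ∇^L F)`. -/
theorem leftLaplacian_product_rule
    {E : Type*} [NormedAddCommGroup E] [NormedSpace ℝ E] [FiniteDimensional ℝ E]
    (B : E → (E →ₗ[ℝ] E →ₗ[ℝ] ℝ))
    (hB1 : ∀ x v, (∀ w, B x v w = 0) → v = 0)
    (hB2 : ∀ x w, (∀ v, B x v w = 0) → w = 0)
    (F G : E → ℝ) (hF : Differentiable ℝ F) (hG : Differentiable ℝ G)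
    (gF gG g : E → E)
    (hgF : Differentiable ℝ gF) (hgG : Differentiable ℝ gG) (hg : Differentiable ℝ g)
    (hgFgrad : ∀ x w, B x (gF x) w = fderiv ℝ F x w)
    (hgGgrad : ∀ x w, B x (gG x) w = fderiv ℝ G x w)
    (hggrad : ∀ x w, B x (g x) w = fderiv ℝ (fun y => F y * G y) x w) :
    ∀ x, LinearMap.trace ℝ E (fderiv ℝ g x).toLinearMap =
      F x * LinearMap.trace ℝ E (fderiv ℝ gG x).toLinearMap +
      G x * LinearMap.trace ℝ E (fderiv ℝ gF x).toLinearMap +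
      B x (gF x) (gG x) + B x (gG x) (gF x) := by
  have hgx : g = fun y => F y • gG y + G y • gF y := by
    funext y
    have key : ∀ w, B y (g y - (F y • gG y + G y • gF y)) w = 0 := by
      intro w
      have hmul := fderiv_fun_mul (hF y) (hG y)
      have : fderiv ℝ (fun z => F z * G z) y w
          = F y * fderiv ℝ G y w + G y * fderiv ℝ F y w := by
        rw [hmul]; simp [smul_eq_mul]
      simp only [map_sub, map_add, map_smul, LinearMap.sub_apply, LinearMap.add_apply,
        LinearMap.smul_apply, hggrad, hgFgrad, hgGgrad, this, smul_eq_mul]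
      ring
    exact sub_eq_zero.mp (hB1 y _ key)
  intro x
  rw [hgx]
  have d1 : DifferentiableAt ℝ (fun y => F y • gG y) x := (hF x).smul (hgG x)
  have d2 : DifferentiableAt ℝ (fun y => G y • gF y) x := (hG x).smul (hgF x)
  rw [fderiv_fun_add d1 d2, fderiv_fun_smul (hF x) (hgG x), fderiv_fun_smul (hG x) (hgF x)]
  simp only [ContinuousLinearMap.coe_add, ContinuousLinearMap.coe_smul, map_add, map_smul,
    trace_clm_smulRight, smul_eq_mul]
  rw [← hgFgrad, ← hgGgrad]
  ring
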